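/- Let n ≥ 2 and let φ : H_n → H_n be an injective group homomorphism. Then a point x ∈ X_n has infinite orbit under φ(g) for some g ∈ H_n if and only if x has infinite orbit under φ(g_i) for some i ∈ {2,…,n}; that is, ⋃_{g ∈ H_n} Es(φ(g)) = ⋃_{i=2}^{n} Es(φ(g_i)). -/

import Mathlib

/-! ## Houghton's groups: basic setup -/

/-- The underlying set of Houghton's group: `n` rays of discrete points;
`(i, p)` is the point at position `p` on the ray `R_i`. -/
abbrev XH (n : ℕ) : Type := Fin n × ℕ

/-- `g` acts, outside a finite set, as the translation by `m i` on the ray `R_i`. -/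
def HasTranslationVector {n : ℕ} (g : Equiv.Perm (XH n)) (m : Fin n → ℤ) : Prop :=
  ∃ K : Finset (XH n), ∀ x : XH n, x ∉ K →
    (g x).1 = x.1 ∧ ((g x).2 : ℤ) = (x.2 : ℤ) + m x.1

/-- An eventual translation of `X_n`. -/
def IsEventualTranslation {n : ℕ} (g : Equiv.Perm (XH n)) : Prop :=
  ∃ m : Fin n → ℤ, HasTranslationVector g m

/-- Houghton's group `H_n`: the group of all eventual translations of `X_n`. -/
def Houghton (n : ℕ) : Subgroup (Equiv.Perm (XH n)) where
  carrier := {g | IsEventualTranslation g}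
  one_mem' := ⟨0, ∅, fun x _ => by simp⟩
  mul_mem' := by
    rintro a b ⟨ma, Ka, hKa⟩ ⟨mb, Kb, hKb⟩
    classical
    refine ⟨ma + mb, Kb ∪ Kb.image b ∪ Ka.image b.symm, fun x hx => ?_⟩
    simp only [Finset.mem_union, not_or] at hx
    have hxb : x ∉ Kb := hx.1.1
    have hbx : b x ∉ Ka := by
      intro hc
      exact hx.2 (Finset.mem_image.mpr ⟨b x, hc, b.symm_apply_apply x⟩)
    obtain ⟨hb1, hb2⟩ := hKb x hxb
    obtain ⟨ha1, ha2⟩ := hKa (b x) hbx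
    refine ⟨?_, ?_⟩
    · show (a (b x)).1 = x.1
      rw [ha1, hb1]
    · show ((a (b x)).2 : ℤ) = (x.2 : ℤ) + (ma + mb) x.1
      rw [ha2, hb1, hb2, Pi.add_apply]
      ring
  inv_mem' := by
    rintro a ⟨m, K, hK⟩
    classical
    refine ⟨-m, K.image a, fun x hx => ?_⟩
    have hy : a⁻¹ x ∉ K := by
      intro hc
      exact hx (Finset.mem_image.mpr ⟨a⁻¹ x, hc, a.apply_symm_apply x⟩)
    obtain ⟨e1, e2⟩ := hK _ hy
    rw [show a (a⁻¹ x) = x from a.apply_symm_apply x] at e1 e2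
    refine ⟨e1.symm, ?_⟩
    rw [← e1] at e2
    rw [Pi.neg_apply]
    omega

/-- The subgroup of finitely supported permutations of `X_n`. -/
def FSymSub (n : ℕ) : Subgroup (Equiv.Perm (XH n)) where
  carrier := {g | {x | g x ≠ x}.Finite}
  one_mem' := by simp
  mul_mem' := by
    intro a b ha hb
    apply Set.Finite.subset (ha.union hb)
    intro x hx
    by_cases h : b x = x
    · left
      show a x ≠ x
      simpa [Equiv.Perm.mul_apply, h] using hx
    · right; exact h
  inv_mem' := by
    intro a ha
    apply Set.Finite.subset ha
    intro x hx
    show a x ≠ x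
    intro hc
    apply hx
    show a⁻¹ x = x
    conv_lhs => rw [← hc]
    exact a.symm_apply_apply x

/-- The subgroup of finitely supported even permutations of `X_n`:
products of an even number of transpositions. -/
def FAltSub (n : ℕ) : Subgroup (Equiv.Perm (XH n)) where
  carrier := {g | ∃ l : List (Equiv.Perm (XH n)),
    (∀ τ ∈ l, τ.IsSwap) ∧ Even l.length ∧ l.prod = g}
  one_mem' := ⟨[], by simp, by simp, by simp⟩
  mul_mem' := by
    rintro a b ⟨la, hla, hea, rfl⟩ ⟨lb, hlb, heb, rfl⟩
    refine ⟨la ++ lb, ?_, ?_, List.prod_append⟩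
    · intro τ hτ
      rcases List.mem_append.mp hτ with h | h
      exacts [hla τ h, hlb τ h]
    · simpa using hea.add heb
  inv_mem' := by
    rintro a ⟨l, hl, he, rfl⟩
    refine ⟨(l.map fun x => x⁻¹).reverse, ?_, by simpa using he,
      (List.prod_inv_reverse l).symm⟩
    intro τ hτ
    rw [List.mem_reverse, List.mem_map] at hτ
    obtain ⟨σ, hσ, rfl⟩ := hτ
    obtain ⟨x, y, hxy, rfl⟩ := hl σ hσ
    exact ⟨x, y, hxy, by rw [Equiv.swap_inv]⟩

/-- `FSym_n` and `FAlt_n` viewed as subgroups of `H_n`. -/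
def FSymIn (n : ℕ) : Subgroup (Houghton n) := (FSymSub n).comap (Houghton n).subtype

def FAltIn (n : ℕ) : Subgroup (Houghton n) := (FAltSub n).comap (Houghton n).subtype

/-- The index of the first ray `R_1`. -/
def ray0 (n : ℕ) (hn : 0 < n) : Fin n := ⟨0, hn⟩

/-- The underlying function of the generator `g_i`. -/
def gFun (n : ℕ) (hn : 0 < n) (i : Fin n) : XH n → XH n := fun x =>
  if x.1 = ray0 n hn then (if x.2 = 0 then (i, 0) else (ray0 n hn, x.2 - 1))
  else if x.1 = i then (i, x.2 + 1) else x

/-- The inverse of `gFun`. -/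
def gInvFun (n : ℕ) (hn : 0 < n) (i : Fin n) : XH n → XH n := fun x =>
  if x.1 = i then (if x.2 = 0 then (ray0 n hn, 0) else (i, x.2 - 1))
  else if x.1 = ray0 n hn then (ray0 n hn, x.2 + 1) else x

/-- The generator `g_i` of `H_n` (as a permutation): it translates the first ray
down by one, sends `(1,1)` to `(i,1)` and translates the ray `R_i` up by one. -/
def gGen (n : ℕ) (hn : 0 < n) (i : Fin n) (hi : i ≠ ray0 n hn) : Equiv.Perm (XH n) where
  toFun := gFun n hn i
  invFun := gInvFun n hn i
  left_inv := by
    rintro ⟨j, p⟩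
    show gInvFun n hn i (gFun n hn i (j, p)) = (j, p)
    simp only [gFun, gInvFun]
    split_ifs <;> simp_all [Prod.ext_iff] <;> omega
  right_inv := by
    rintro ⟨j, p⟩
    show gFun n hn i (gInvFun n hn i (j, p)) = (j, p)
    simp only [gFun, gInvFun]
    split_ifs <;> simp_all [Prod.ext_iff] <;> omega

/-- The translation vector of `g_i`. -/
def gVec (n : ℕ) (hn : 0 < n) (i : Fin n) : Fin n → ℤ :=
  fun j => if j = ray0 n hn then -1 else if j = i then 1 else 0

theorem gGen_mem (n : ℕ) (hn : 0 < n) (i : Fin n) (hi : i ≠ ray0 n hn) :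
    gGen n hn i hi ∈ Houghton n := by
  refine ⟨gVec n hn i, {(ray0 n hn, 0)}, ?_⟩
  rintro ⟨j, p⟩ hx
  rw [Finset.mem_singleton] at hx
  have hx' : j ≠ ray0 n hn ∨ p ≠ 0 := by
    by_contra h
    push_neg at h
    exact hx (by rw [h.1, h.2])
  show (gFun n hn i (j, p)).1 = j ∧ ((gFun n hn i (j, p)).2 : ℤ) = (p : ℤ) + gVec n hn i j
  simp only [gFun, gVec]
  split_ifs <;> simp_all [Prod.ext_iff] <;> omega

/-- The generator `g_i` as an element of `H_n`. -/
def hGen (n : ℕ) (hn : 0 < n) (i : Fin n) (hi : i ≠ ray0 n hn) : Houghton n :=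
  ⟨gGen n hn i hi, gGen_mem n hn i hi⟩

/-- The transposition `α` exchanging `(1,1)` and `(1,2)`. -/
def alphaPerm (n : ℕ) (hn : 0 < n) : Equiv.Perm (XH n) :=
  Equiv.swap (ray0 n hn, 0) (ray0 n hn, 1)

theorem alphaPerm_mem (n : ℕ) (hn : 0 < n) : alphaPerm n hn ∈ Houghton n := by
  refine ⟨0, {(ray0 n hn, 0), (ray0 n hn, 1)}, ?_⟩
  intro x hx
  simp only [Finset.mem_insert, Finset.mem_singleton, not_or] at hx
  rw [show alphaPerm n hn x = x from Equiv.swap_apply_of_ne_of_ne hx.1 hx.2]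
  simp

/-- `α` as an element of `H_n`. -/
def hAlpha (n : ℕ) (hn : 0 < n) : Houghton n := ⟨alphaPerm n hn, alphaPerm_mem n hn⟩

theorem alphaPerm_mem_FSym (n : ℕ) (hn : 0 < n) : alphaPerm n hn ∈ FSymSub n := by
  show {x | alphaPerm n hn x ≠ x}.Finite
  apply Set.Finite.subset ((Set.finite_singleton (ray0 n hn, 1)).insert (ray0 n hn, 0))
  intro x hx
  by_contra hc
  simp only [Set.mem_insert_iff, Set.mem_singleton_iff, not_or] at hc
  exact hx (Equiv.swap_apply_of_ne_of_ne hc.1 hc.2)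

theorem swap_mem_houghton {n : ℕ} (P Q : XH n) : Equiv.swap P Q ∈ Houghton n := by
  classical
  refine ⟨0, {P, Q}, ?_⟩
  intro x hx
  simp only [Finset.mem_insert, Finset.mem_singleton, not_or] at hx
  rw [Equiv.swap_apply_of_ne_of_ne hx.1 hx.2]
  simp

/-- The transposition exchanging two points, as an element of `H_n`. -/
def hSwap {n : ℕ} (P Q : XH n) : Houghton n := ⟨Equiv.swap P Q, swap_mem_houghton P Q⟩

/-- The set of generators `{g_2, …, g_n}` of `H_n`. -/
def houghtonGensOnly (n : ℕ) (hn : 0 < n) : Set (Houghton n) :=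
  {x | ∃ (i : Fin n) (hi : i ≠ ray0 n hn), x = hGen n hn i hi}

/-- The chosen generating set of `H_n`: `{g_2, …, g_n}` for `n ≠ 2`,
and `{g_2, α}` for `n = 2`. -/
def houghtonGenSet (n : ℕ) (hn : 0 < n) : Set (Houghton n) :=
  if n = 2 then houghtonGensOnly n hn ∪ {hAlpha n hn} else houghtonGensOnly n hn

/-- Word length with respect to a set of generators (and their inverses). -/
noncomputable def wordLength {G : Type*} [Group G] (S : Set G) (g : G) : ℕ :=
  sInf {k | ∃ l : List G, (∀ x ∈ l, x ∈ S ∨ x⁻¹ ∈ S) ∧ l.length = k ∧ l.prod = g}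

/-- The growth rate of an endomorphism `φ`:
`GR(φ) = sup_g limsup_k |φ^k(g)|^{1/k}`. -/
noncomputable def growthRate {G : Type*} [Group G] (S : Set G) (φ : G →* G) : ℝ :=
  ⨆ g : G, Filter.limsup
    (fun k : ℕ => (wordLength S ((⇑φ)^[k] g) : ℝ) ^ (1 / (k : ℝ))) Filter.atTop

/-- The orbit of `x` under the permutation `h`. -/
def permOrbit {α : Type*} (h : Equiv.Perm α) (x : α) : Set α :=
  Set.range (fun k : ℤ => (h ^ k) x)

/-- `x` has infinite orbit under `h` (`x` is an essential point of `h`). -/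
def InfiniteOrbit {α : Type*} (h : Equiv.Perm α) (x : α) : Prop :=
  (permOrbit h x).Infinite

/-- The image `φ(g_i)` as a permutation of `X_n`. -/
def imageGen {n : ℕ} (h0 : 0 < n) (φ : Houghton n →* Houghton n)
    (i : Fin n) (hi : i ≠ ray0 n h0) : Equiv.Perm (XH n) :=
  ↑(φ (hGen n h0 i hi))

/-- The image `φ(α)` as a permutation of `X_n`. -/
def imageAlpha {n : ℕ} (h0 : 0 < n) (φ : Houghton n →* Houghton n) : Equiv.Perm (XH n) :=
  ↑(φ (hAlpha n h0))

/-- A transposition-orbit of an involution: a pair `{x, h x}` with `h x ≠ x`. -/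
def TOrbit {Ω : Type*} (h : Equiv.Perm Ω) (T : Set Ω) : Prop :=
  ∃ x, h x ≠ x ∧ T = {x, h x}

/-- The zero-sum vectors in `ℤ^n`. -/
def zeroSum (n : ℕ) : AddSubgroup (Fin n → ℤ) where
  carrier := {m | ∑ j, m j = 0}
  zero_mem' := by simp
  add_mem' := by
    intro a b ha hb
    simp only [Set.mem_setOf_eq] at *
    simp [Finset.sum_add_distrib, ha, hb]
  neg_mem' := by
    intro a ha
    simp only [Set.mem_setOf_eq] at *
    simp [ha]

set_option linter.unusedVariables false

section OrbitLemmas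

variable {α : Type*}

lemma fixpt_zpow {f : Equiv.Perm α} {x : α} (h : f x = x) : ∀ k : ℤ, (f ^ k) x = x := by
  have hn : ∀ m : ℕ, (f ^ m) x = x := by
    intro m; induction m with
    | zero => simp
    | succ m ih => rw [pow_succ, Equiv.Perm.mul_apply, h, ih]
  intro k
  cases k with
  | ofNat m => simpa using hn m
  | negSucc m =>
    have h1 : (f ^ (m+1 : ℕ)) x = x := hn (m+1)
    have h2 : (f ^ (m+1:ℕ))⁻¹ ((f ^ (m+1:ℕ)) x) = (f ^ (m+1:ℕ))⁻¹ x :=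
      congrArg (fun y => (f ^ (m+1:ℕ))⁻¹ y) h1
    rw [← Equiv.Perm.mul_apply, inv_mul_cancel, Equiv.Perm.one_apply] at h2
    rw [Int.negSucc_eq, zpow_neg, show ((m:ℤ)+1) = ((m+1:ℕ):ℤ) by push_cast; ring,
      zpow_natCast]
    exact h2.symm

lemma fixpt_zpow_dvd {f : Equiv.Perm α} {x : α} {e : ℕ} (he : (f ^ e) x = x) {k : ℤ}
    (hdvd : (e : ℤ) ∣ k) : (f ^ k) x = x := by
  obtain ⟨c, rfl⟩ := hdvd
  rw [zpow_mul]
  exact fixpt_zpow (by simpa [← zpow_natCast] using he) c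

lemma diff_fix {f : Equiv.Perm α} {x : α} {a b : ℤ} (h : (f ^ a) x = (f ^ b) x) :
    (f ^ (a - b)) x = x := by
  have h2 : (f ^ (-b + a)) x = (f ^ (-b + b)) x := by
    rw [zpow_add, zpow_add, Equiv.Perm.mul_apply, Equiv.Perm.mul_apply, h]
  have h3 : (-b) + a = a - b := by ring
  rw [h3] at h2
  simpa using h2

lemma finOrbit_of_period {f : Equiv.Perm α} {x : α} {e : ℕ} (he : 0 < e)
    (h : (f ^ e) x = x) : ¬ InfiniteOrbit f x := by
  intro hinf
  apply hinf
  have hsub : permOrbit f x ⊆ (fun r : ℕ => (f ^ r) x) '' (Set.Iio e) := by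
    rintro y ⟨k, rfl⟩
    refine ⟨(k % e).toNat, ?_, ?_⟩
    · have h1 : 0 ≤ k % (e:ℤ) := Int.emod_nonneg k (by exact_mod_cast he.ne')
      have h2 : k % (e:ℤ) < e := Int.emod_lt_of_pos k (by exact_mod_cast he)
      simp only [Set.mem_Iio]; omega
    · have h1 : 0 ≤ k % (e:ℤ) := Int.emod_nonneg k (by exact_mod_cast he.ne')
      have hk : k % (e:ℤ) + (e:ℤ) * (k / e) = k := Int.emod_add_mul_ediv k e
      show (f ^ ((k % (e:ℤ)).toNat : ℕ)) x = (f ^ k) x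
      have hstep : (f ^ k) x = (f ^ (k % (e:ℤ))) ((f ^ ((e:ℤ) * (k / e))) x) := by
        rw [← Equiv.Perm.mul_apply, ← zpow_add, hk]
      rw [hstep, fixpt_zpow_dvd h (Dvd.intro _ rfl), ← zpow_natCast,
        Int.toNat_of_nonneg h1]
  exact Set.Finite.subset ((Set.finite_Iio e).image _) hsub

lemma finOrbit_of_two {f : Equiv.Perm α} {x : α} {a b : ℤ} (hne : a ≠ b)
    (h : (f ^ a) x = (f ^ b) x) : ¬ InfiniteOrbit f x := by
  have hpos : 0 < (a - b).natAbs := by omega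
  refine finOrbit_of_period hpos ?_
  rcases Int.natAbs_eq (a - b) with h1 | h1
  · have : (f ^ (((a-b).natAbs : ℤ))) x = x := by rw [← h1]; exact diff_fix h
    rwa [zpow_natCast] at this
  · have h2 : (((a-b).natAbs : ℤ)) = b - a := by omega
    have : (f ^ (((a-b).natAbs : ℤ))) x = x := by rw [h2]; exact diff_fix h.symm
    rwa [zpow_natCast] at this

lemma period_of_finOrbit {f : Equiv.Perm α} {x : α} (h : ¬ InfiniteOrbit f x) :
    ∃ e : ℕ, 0 < e ∧ (f ^ e) x = x := by
  have hfin : (permOrbit f x).Finite := Set.not_infinite.mp h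
  have hni : ¬ Function.Injective (fun k : ℤ => (f ^ k) x) := by
    intro hinj
    exact (Set.infinite_range_of_injective hinj) hfin
  simp only [Function.Injective, not_forall] at hni
  obtain ⟨a, b, hab, hne⟩ := hni
  refine ⟨(a - b).natAbs, by omega, ?_⟩
  rcases Int.natAbs_eq (a - b) with h1 | h1
  · have : (f ^ (((a-b).natAbs : ℤ))) x = x := by rw [← h1]; exact diff_fix hab
    rwa [zpow_natCast] at this
  · have h2 : (((a-b).natAbs : ℤ)) = b - a := by omega
    have : (f ^ (((a-b).natAbs : ℤ))) x = x := by rw [h2]; exact diff_fix hab.symm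
    rwa [zpow_natCast] at this

lemma infOrbit_zpow_inj {f : Equiv.Perm α} {x : α} (h : InfiniteOrbit f x) :
    Function.Injective (fun k : ℤ => (f ^ k) x) := by
  intro a b hab
  by_contra hne
  exact finOrbit_of_two hne hab h

lemma infOrbit_natpow_inj {f : Equiv.Perm α} {x : α} (h : InfiniteOrbit f x) {s t : ℕ}
    (hst : (f ^ s) x = (f ^ t) x) : s = t := by
  have h1 : ((s : ℕ) : ℤ) = ((t : ℕ) : ℤ) := by
    apply infOrbit_zpow_inj h
    show (f ^ ((s : ℕ) : ℤ)) x = (f ^ ((t : ℕ) : ℤ)) x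
    rw [zpow_natCast, zpow_natCast]
    exact hst
  exact_mod_cast h1

lemma infOrbit_pow_inj {f : Equiv.Perm α} {x : α} (h : InfiniteOrbit f x) {c : ℕ} (hc : 0 < c) :
    Function.Injective (fun t : ℕ => (f ^ (c * t)) x) := by
  intro a b hab
  have h2 : ((c*a:ℕ):ℤ) = ((c*b:ℕ):ℤ) :=
    infOrbit_zpow_inj h (by simp only [zpow_natCast]; exact hab)
  have h3 : (c*a:ℕ) = (c*b:ℕ) := by exact_mod_cast h2
  exact Nat.eq_of_mul_eq_mul_left hc h3

end OrbitLemmas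
section Vec

variable {n : ℕ}

lemma mem_houghton_iff {g : Equiv.Perm (XH n)} : g ∈ Houghton n ↔ IsEventualTranslation g :=
  Iff.rfl

lemma htv_unique {g : Equiv.Perm (XH n)} {m m' : Fin n → ℤ}
    (h : HasTranslationVector g m) (h' : HasTranslationVector g m') : m = m' := by
  funext r
  obtain ⟨K, hK⟩ := h
  obtain ⟨K', hK'⟩ := h'
  set p : ℕ := ((K ∪ K').sup (fun w => w.2)) + 1 with hp
  have hmem : ((r, p) : XH n) ∉ K ∪ K' := by
    intro hmem
    have := Finset.le_sup (f := fun w : XH n => w.2) hmem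
    simp only at this
    omega
  have h1 := (hK (r,p) (fun hc => hmem (Finset.mem_union_left _ hc))).2
  have h2 := (hK' (r,p) (fun hc => hmem (Finset.mem_union_right _ hc))).2
  rw [h1] at h2
  simpa using h2

lemma htv_mul {a b : Equiv.Perm (XH n)} {ma mb : Fin n → ℤ}
    (hKa' : HasTranslationVector a ma) (hKb' : HasTranslationVector b mb) :
    HasTranslationVector (a * b) (ma + mb) := by
  classical
  obtain ⟨Ka, hKa⟩ := hKa'
  obtain ⟨Kb, hKb⟩ := hKb'
  refine ⟨Kb ∪ Kb.image b ∪ Ka.image b.symm, fun x hx => ?_⟩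
  simp only [Finset.mem_union, not_or] at hx
  have hxb : x ∉ Kb := hx.1.1
  have hbx : b x ∉ Ka := by
    intro hc
    exact hx.2 (Finset.mem_image.mpr ⟨b x, hc, b.symm_apply_apply x⟩)
  obtain ⟨hb1, hb2⟩ := hKb x hxb
  obtain ⟨ha1, ha2⟩ := hKa (b x) hbx
  refine ⟨?_, ?_⟩
  · show (a (b x)).1 = x.1
    rw [ha1, hb1]
  · show ((a (b x)).2 : ℤ) = (x.2 : ℤ) + (ma + mb) x.1
    rw [ha2, hb1, hb2, Pi.add_apply]
    ring

noncomputable def vec (g : Houghton n) : Fin n → ℤ :=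
  (mem_houghton_iff.mp g.2).choose

lemma vec_spec (g : Houghton n) :
    HasTranslationVector (g : Equiv.Perm (XH n)) (vec g) :=
  (mem_houghton_iff.mp g.2).choose_spec

lemma vec_one : vec (1 : Houghton n) = 0 := by
  refine htv_unique (vec_spec 1) ⟨∅, fun x _ => ?_⟩
  simp

lemma vec_mul (a b : Houghton n) : vec (a * b) = vec a + vec b := by
  refine htv_unique ?_ (htv_mul (vec_spec a) (vec_spec b))
  have := vec_spec (a * b)
  rwa [Subgroup.coe_mul] at this

lemma vec_inv (a : Houghton n) : vec a⁻¹ = - vec a := by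
  have h := vec_mul a a⁻¹
  rw [mul_inv_cancel, vec_one] at h
  funext r
  have := congrFun h r
  simp only [Pi.add_apply, Pi.zero_apply] at this
  simp only [Pi.neg_apply]
  omega

lemma vec_pow (a : Houghton n) (k : ℕ) : vec (a ^ k) = (k : ℤ) • vec a := by
  induction k with
  | zero => simpa using vec_one
  | succ k ih =>
    rw [pow_succ, vec_mul, ih]
    funext r
    simp only [Pi.add_apply, Pi.smul_apply, smul_eq_mul]
    push_cast
    ring

lemma vec_zpow (a : Houghton n) (k : ℤ) : vec (a ^ k) = k • vec a := by
  cases k with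
  | ofNat m => simpa using vec_pow a m
  | negSucc m =>
    rw [Int.negSucc_eq, zpow_neg, vec_inv, show ((m:ℤ)+1) = ((m+1:ℕ):ℤ) by push_cast; ring,
      zpow_natCast, vec_pow]
    funext r
    simp only [Pi.neg_apply, Pi.smul_apply, smul_eq_mul]
    push_cast
    ring

lemma vec_list_prod (L : List (Houghton n)) : vec L.prod = (L.map vec).sum := by
  induction L with
  | nil => simpa using vec_one
  | cons a L ih => rw [List.prod_cons, vec_mul, ih, List.map_cons, List.sum_cons]

lemma isFin_of_vec_zero (g : Houghton n) (h : vec g = 0) :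
    {x | (g : Equiv.Perm (XH n)) x ≠ x}.Finite := by
  obtain ⟨K, hK⟩ := vec_spec g
  apply Set.Finite.subset K.finite_toSet
  intro x hx
  by_contra hc
  apply hx
  obtain ⟨h1, h2⟩ := hK x (by simpa using hc)
  rw [h] at h2
  simp only [Pi.zero_apply, add_zero, Nat.cast_inj] at h2
  exact Prod.ext h1 h2

lemma vec_eq_zero_of_sq (g : Houghton n) (h : g * g = 1) : vec g = 0 := by
  have h2 := vec_mul g g
  rw [h, vec_one] at h2
  funext r
  have := congrFun h2 r
  simp only [Pi.add_apply, Pi.zero_apply] at this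
  simp only [Pi.zero_apply]
  omega

lemma htv_gGen (hn : 0 < n) (i : Fin n) (hi : i ≠ ray0 n hn) :
    HasTranslationVector (gGen n hn i hi) (gVec n hn i) := by
  refine ⟨{(ray0 n hn, 0)}, ?_⟩
  rintro ⟨j, p⟩ hx
  rw [Finset.mem_singleton] at hx
  have hx' : j ≠ ray0 n hn ∨ p ≠ 0 := by
    by_contra h
    push_neg at h
    exact hx (by rw [h.1, h.2])
  show (gFun n hn i (j, p)).1 = j ∧ ((gFun n hn i (j, p)).2 : ℤ) = (p : ℤ) + gVec n hn i j
  simp only [gFun, gVec]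
  split_ifs <;> simp_all [Prod.ext_iff] <;> omega

lemma vec_hGen (hn : 0 < n) (i : Fin n) (hi : i ≠ ray0 n hn) :
    vec (hGen n hn i hi) = gVec n hn i :=
  htv_unique (vec_spec _) (htv_gGen hn i hi)

end Vec
section ZeroSum

variable {n : ℕ}

lemma vec_sum_zero (g : Houghton n) : ∑ i, vec g i = 0 := by
  classical
  obtain ⟨K, hK⟩ := vec_spec g
  set m := vec g with hm
  set gp : Equiv.Perm (XH n) := (g : Equiv.Perm (XH n)) with hgp
  set M : ℕ := Finset.univ.sup (fun i : Fin n => (m i).natAbs) with hM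
  set Kb : ℕ := K.sup (fun w => w.2) with hKb
  set KB2 : ℕ := (K.image (fun w => gp w)).sup (fun w => w.2) with hKB2
  have hMi : ∀ i : Fin n, (m i).natAbs ≤ M := fun i =>
    Finset.le_sup (f := fun i : Fin n => (m i).natAbs) (Finset.mem_univ i)
  obtain ⟨P, hP1, hP2, hP3⟩ : ∃ P : ℕ, Kb < P ∧ KB2 + M < P ∧ M ≤ P :=
    ⟨Kb + KB2 + M + 1, by omega, by omega, by omega⟩
  set S : Finset (XH n) := Finset.univ ×ˢ Finset.range P with hS
  set T : Finset (XH n) :=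
    Finset.univ.biUnion
      (fun i : Fin n => (Finset.range ((P : ℤ) + m i).toNat).image (fun p => ((i, p) : XH n)))
    with hT
  have memT : ∀ y : XH n, y ∈ T ↔ (y.2 : ℤ) < (P : ℤ) + m y.1 := by
    intro y
    constructor
    · intro hy
      obtain ⟨i, _, hy2⟩ := Finset.mem_biUnion.mp hy
      obtain ⟨p, hp, rfl⟩ := Finset.mem_image.mp hy2
      rw [Finset.mem_range] at hp
      simp only
      omega
    · intro hy
      refine Finset.mem_biUnion.mpr ⟨y.1, Finset.mem_univ _, Finset.mem_image.mpr
        ⟨y.2, Finset.mem_range.mpr (by omega), ?_⟩⟩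
      exact Prod.ext rfl rfl
  have hST : S.image gp = T := by
    ext y
    constructor
    · intro hy
      obtain ⟨x, hxS, rfl⟩ := Finset.mem_image.mp hy
      have hx2 : x.2 < P := by
        have := (Finset.mem_product.mp hxS).2
        simpa using this
      rw [memT]
      by_cases hxK : x ∈ K
      · have h1 : gp x ∈ K.image (fun w => gp w) := Finset.mem_image_of_mem _ hxK
        have h2 : (gp x).2 ≤ KB2 := Finset.le_sup (f := fun w : XH n => w.2) h1
        have h3 := hMi (gp x).1
        omega
      · obtain ⟨h1, h2⟩ := hK x hxK
        rw [h1]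
        omega
    · intro hy
      rw [memT] at hy
      refine Finset.mem_image.mpr ⟨gp.symm y, ?_, gp.apply_symm_apply y⟩
      rw [hS, Finset.mem_product]
      refine ⟨Finset.mem_univ _, Finset.mem_range.mpr ?_⟩
      by_contra hc
      push_neg at hc
      have hxK : gp.symm y ∉ K := by
        intro hmem
        have := Finset.le_sup (f := fun w : XH n => w.2) hmem
        omega
      obtain ⟨h1, h2⟩ := hK (gp.symm y) hxK
      rw [gp.apply_symm_apply] at h1 h2
      rw [h1] at hy
      omega
  have hcardS : S.card = n * P := by
    rw [hS, Finset.card_product, Finset.card_univ, Fintype.card_fin, Finset.card_range]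
  have hcardim : (S.image gp).card = S.card :=
    Finset.card_image_of_injective S gp.injective
  have hcardT : T.card = ∑ i : Fin n, ((P : ℤ) + m i).toNat := by
    rw [hT]
    rw [Finset.card_biUnion]
    · refine Finset.sum_congr rfl (fun i _ => ?_)
      rw [Finset.card_image_of_injective _ (fun a b hab => by simpa using hab),
        Finset.card_range]
    · intro i _ j _ hij
      rw [Function.onFun, Finset.disjoint_left]
      intro a ha hb
      obtain ⟨p, _, rfl⟩ := Finset.mem_image.mp ha
      obtain ⟨q, _, hq⟩ := Finset.mem_image.mp hb
      exact hij (congrArg Prod.fst hq).symm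
  have hkey : (n : ℤ) * P = ∑ i : Fin n, ((P : ℤ) + m i) := by
    have h1 : n * P = ∑ i : Fin n, ((P : ℤ) + m i).toNat := by
      rw [← hcardS, ← hcardim, hST, hcardT]
    have h2 := congrArg (Nat.cast : ℕ → ℤ) h1
    push_cast at h2
    rw [h2]
    refine Finset.sum_congr rfl (fun i _ => ?_)
    have := hMi i
    omega
  rw [Finset.sum_add_distrib, Finset.sum_const, Finset.card_univ, Fintype.card_fin] at hkey
  simp only [nsmul_eq_mul] at hkey
  omega

end ZeroSum
section Finitary

lemma finOrbit_of_isFin {α : Type*} {f : Equiv.Perm α} (hf : {x | f x ≠ x}.Finite) (x : α) :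
    ¬ InfiniteOrbit f x := by
  intro hinf
  apply hinf
  have hsub : permOrbit f x ⊆ insert x {y | f y ≠ y} := by
    rintro w ⟨k, rfl⟩
    by_contra hc
    simp only [Set.mem_insert_iff, Set.mem_setOf_eq, not_or, not_not] at hc
    obtain ⟨hc1, hc2⟩ := hc
    have h1 : (f ^ (-k)) ((f ^ k) x) = (f ^ k) x := fixpt_zpow hc2 (-k)
    rw [← Equiv.Perm.mul_apply, ← zpow_add, neg_add_cancel] at h1
    simp only [zpow_zero, Equiv.Perm.coe_one, id_eq] at h1
    exact hc1 h1.symm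
  exact Set.Finite.subset (hf.insert x) hsub

lemma perm_fin_swaps_aux {α : Type*} [DecidableEq α] :
    ∀ (N : ℕ) (g : Equiv.Perm α) (h : {x | g x ≠ x}.Finite), h.toFinset.card ≤ N →
    ∃ L : List (α × α), g = (L.map fun pq => Equiv.swap pq.1 pq.2).prod := by
  intro N
  induction N with
  | zero =>
    intro g h hcard
    refine ⟨[], ?_⟩
    simp only [List.map_nil, List.prod_nil]
    ext x
    by_contra hc
    have hx : x ∈ h.toFinset := by simpa using hc
    have := Finset.card_pos.mpr ⟨x, hx⟩
    omega
  | succ N ih =>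
    intro g h hcard
    by_cases hg : g = 1
    · exact ⟨[], by simp [hg]⟩
    · have : ∃ a, g a ≠ a := by
        by_contra hc
        push_neg at hc
        exact hg (Equiv.ext hc)
      obtain ⟨a, ha⟩ := this
      set τ := Equiv.swap a (g a) with hτ
      set g' := τ * g with hg'
      have hsub : {x | g' x ≠ x} ⊆ {x | g x ≠ x} \ {a} := by
        intro x hx
        simp only [Set.mem_setOf_eq] at hx
        constructor
        · by_contra hgx
          simp only [Set.mem_setOf_eq, not_not] at hgx
          apply hx
          have hxa : x ≠ a := fun hc => ha (by rw [← hc, hgx])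
          have hxga : x ≠ g a := by
            intro hc
            rw [hc] at hgx
            exact ha (g.injective hgx)
          show τ (g x) = x
          rw [hgx]
          exact Equiv.swap_apply_of_ne_of_ne hxa hxga
        · intro hc
          simp only [Set.mem_singleton_iff] at hc
          subst hc
          apply hx
          show τ (g x) = x
          rw [hτ, Equiv.swap_apply_right]
      have h' : {x | g' x ≠ x}.Finite := h.diff.subset hsub
      have hcard' : h'.toFinset.card ≤ N := by
        have h1 : h'.toFinset ⊆ h.toFinset.erase a := by
          intro x hx
          rw [Set.Finite.mem_toFinset] at hx
          have := hsub hx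
          simp only [Set.mem_diff, Set.mem_singleton_iff] at this
          rw [Finset.mem_erase, Set.Finite.mem_toFinset]
          exact ⟨this.2, this.1⟩
        have h2 := Finset.card_le_card h1
        have h3 : a ∈ h.toFinset := by rw [Set.Finite.mem_toFinset]; exact ha
        have h4 := Finset.card_erase_of_mem h3
        omega
      obtain ⟨L', hL'⟩ := ih g' h' hcard'
      refine ⟨(a, g a) :: L', ?_⟩
      rw [List.map_cons, List.prod_cons, ← hL']
      show g = τ * g'
      rw [hg', ← mul_assoc, Equiv.swap_mul_self, one_mul]

lemma perm_fin_swaps {α : Type*} [DecidableEq α] (g : Equiv.Perm α)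
    (h : {x | g x ≠ x}.Finite) :
    ∃ L : List (α × α), g = (L.map fun pq => Equiv.swap pq.1 pq.2).prod :=
  perm_fin_swaps_aux h.toFinset.card g h le_rfl

variable {n : ℕ}

lemma hough_coe_list_prod (L : List (Houghton n)) :
    ((L.prod : Houghton n) : Equiv.Perm (XH n)) =
      (L.map (fun h : Houghton n => h.val)).prod := by
  induction L with
  | nil => simp
  | cons a L ih => simp [ih]

lemma hough_fin_decomp (σ : Houghton n) (hσ : {x | (σ : Equiv.Perm (XH n)) x ≠ x}.Finite) :
    ∃ L : List (XH n × XH n), σ = (L.map fun pq => hSwap pq.1 pq.2).prod := by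
  obtain ⟨L, hL⟩ := perm_fin_swaps _ hσ
  refine ⟨L, Subtype.ext ?_⟩
  rw [hough_coe_list_prod, List.map_map]
  exact hL

lemma hSwap_sq (P Q : XH n) : hSwap P Q * hSwap P Q = 1 := by
  apply Subtype.ext
  show Equiv.swap P Q * Equiv.swap P Q = 1
  exact Equiv.swap_mul_self P Q

lemma vec_phi_swap_zero (φ : Houghton n →* Houghton n) (P Q : XH n) :
    vec (φ (hSwap P Q)) = 0 := by
  apply vec_eq_zero_of_sq
  rw [← map_mul, hSwap_sq, map_one]

lemma vec_phi_fin_zero (φ : Houghton n →* Houghton n) (σ : Houghton n)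
    (hσ : {x | (σ : Equiv.Perm (XH n)) x ≠ x}.Finite) : vec (φ σ) = 0 := by
  obtain ⟨L, hL⟩ := hough_fin_decomp σ hσ
  rw [hL, map_list_prod, vec_list_prod]
  apply List.sum_eq_zero
  intro v hv
  rw [List.map_map, List.map_map] at hv
  obtain ⟨pq, _, rfl⟩ := List.mem_map.mp hv
  exact vec_phi_swap_zero φ pq.1 pq.2

lemma isFin_phi_fin (φ : Houghton n →* Houghton n) (σ : Houghton n)
    (hσ : {x | (σ : Equiv.Perm (XH n)) x ≠ x}.Finite) :
    {x | ((φ σ : Houghton n) : Equiv.Perm (XH n)) x ≠ x}.Finite :=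
  isFin_of_vec_zero _ (vec_phi_fin_zero φ σ hσ)

end Finitary
section LineParam

variable {n : ℕ}

def lpt (hn : 0 < n) (j : Fin n) (m : ℤ) : XH n :=
  if m < 0 then (ray0 n hn, (-m-1).toNat) else (j, m.toNat)

lemma lpt_step (hn : 0 < n) (j : Fin n) (hj : j ≠ ray0 n hn) (m : ℤ) :
    gGen n hn j hj (lpt hn j m) = lpt hn j (m+1) := by
  show gFun n hn j (lpt hn j m) = lpt hn j (m + 1)
  rcases lt_trichotomy m (-1) with h | h | h
  · have h1 : lpt hn j m = (ray0 n hn, (-m-1).toNat) := by unfold lpt; rw [if_pos (by omega)]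
    have h2 : lpt hn j (m+1) = (ray0 n hn, (-(m+1)-1).toNat) := by
      unfold lpt; rw [if_pos (by omega)]
    rw [h1, h2]
    unfold gFun
    simp only
    rw [if_pos trivial, if_neg (show ¬ (-m-1).toNat = 0 by omega)]
    congr 1
    omega
  · subst h
    have h1 : lpt hn j (-1) = (ray0 n hn, 0) := by unfold lpt; rw [if_pos (by omega)]; congr 1
    have h2 : lpt hn j (-1+1) = (j, 0) := by unfold lpt; rw [if_neg (by omega)]; congr 1
    rw [h1, h2]
    unfold gFun
    simp only
    rw [if_pos trivial, if_pos trivial]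
  · have h1 : lpt hn j m = (j, m.toNat) := by unfold lpt; rw [if_neg (by omega)]
    have h2 : lpt hn j (m+1) = (j, m.toNat + 1) := by
      unfold lpt; rw [if_neg (by omega)]; congr 1; omega
    rw [h1, h2]
    unfold gFun
    simp only
    rw [if_neg hj, if_pos trivial]

lemma lpt_pow (hn : 0 < n) (j : Fin n) (hj : j ≠ ray0 n hn) (b : ℕ) (m : ℤ) :
    ((gGen n hn j hj) ^ b) (lpt hn j m) = lpt hn j (m + b) := by
  induction b generalizing m with
  | zero => simp
  | succ b ih =>
    rw [pow_succ, Equiv.Perm.mul_apply, lpt_step hn j hj, ih (m+1)]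
    congr 1
    push_cast
    ring

lemma lpt_inj (hn : 0 < n) (j : Fin n) (hj : j ≠ ray0 n hn) {m m' : ℤ}
    (h : lpt hn j m = lpt hn j m') : m = m' := by
  unfold lpt at h
  split_ifs at h with h1 h2 h2
  · rw [Prod.ext_iff] at h
    have := h.2
    simp only at this
    omega
  · rw [Prod.ext_iff] at h
    exact absurd h.1 (Ne.symm hj)
  · rw [Prod.ext_iff] at h
    exact absurd h.1 hj
  · rw [Prod.ext_iff] at h
    have := h.2
    simp only at this
    omega

lemma lpt_fst_of_nonneg (hn : 0 < n) (j : Fin n) {m : ℤ} (h : 0 ≤ m) :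
    (lpt hn j m).1 = j := by
  unfold lpt; rw [if_neg (by omega)]

lemma lpt_of_line (hn : 0 < n) (j : Fin n) (P : XH n)
    (h : P.1 = ray0 n hn ∨ P.1 = j) : ∃ m : ℤ, lpt hn j m = P := by
  obtain ⟨r, p⟩ := P
  rcases h with h | h
  · refine ⟨-(p:ℤ)-1, ?_⟩
    unfold lpt
    rw [if_pos (by omega)]
    simp only at h
    subst h
    congr 1
    omega
  · refine ⟨(p : ℤ), ?_⟩
    unfold lpt
    rw [if_neg (by omega)]
    simp only at h
    subst h
    simp

lemma gGen_fix (hn : 0 < n) (j : Fin n) (hj : j ≠ ray0 n hn) (w : XH n)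
    (h1 : w.1 ≠ ray0 n hn) (h2 : w.1 ≠ j) : gGen n hn j hj w = w := by
  show gFun n hn j w = w
  unfold gFun
  rw [if_neg h1, if_neg h2]

lemma gGen_pow_fix (hn : 0 < n) (j : Fin n) (hj : j ≠ ray0 n hn) (b : ℕ) (w : XH n)
    (h1 : w.1 ≠ ray0 n hn) (h2 : w.1 ≠ j) : ((gGen n hn j hj) ^ b) w = w := by
  induction b with
  | zero => simp
  | succ b ih => rw [pow_succ, Equiv.Perm.mul_apply, gGen_fix hn j hj w h1 h2, ih]

lemma hGen_coe_pow (hn : 0 < n) (j : Fin n) (hj : j ≠ ray0 n hn) (b : ℕ) :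
    (((hGen n hn j hj) ^ b : Houghton n) : Equiv.Perm (XH n)) = (gGen n hn j hj) ^ b := by
  induction b with
  | zero => simp
  | succ b ih => rw [pow_succ, pow_succ, Subgroup.coe_mul, ih]; rfl

end LineParam
section Engine

variable {n : ℕ}

lemma hSwap_conj (w : Houghton n) (P Q : XH n) :
    w * hSwap P Q * w⁻¹ = hSwap ((w : Equiv.Perm (XH n)) P) ((w : Equiv.Perm (XH n)) Q) := by
  apply Subtype.ext
  show (w : Equiv.Perm (XH n)) * Equiv.swap P Q * (w : Equiv.Perm (XH n))⁻¹ = Equiv.swap _ _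
  exact (Equiv.swap_apply_apply (w : Equiv.Perm (XH n)) P Q).symm

lemma swap_commute_of_ne {α : Type*} [DecidableEq α] {a b c d : α}
    (h1 : a ≠ c) (h2 : a ≠ d) (h3 : b ≠ c) (h4 : b ≠ d) :
    Commute (Equiv.swap a b) (Equiv.swap c d) := by
  apply Equiv.Perm.Disjoint.commute
  intro x
  by_cases hx : x = a ∨ x = b
  · right
    rcases hx with rfl | rfl
    · exact Equiv.swap_apply_of_ne_of_ne h1 h2
    · exact Equiv.swap_apply_of_ne_of_ne h3 h4
  · left
    push_neg at hx
    exact Equiv.swap_apply_of_ne_of_ne hx.1 hx.2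

lemma hough_commute {a b : Houghton n}
    (h : Commute (a : Equiv.Perm (XH n)) (b : Equiv.Perm (XH n))) : Commute a b :=
  Subtype.ext h

lemma GPL (φ : Houghton n →* Houghton n) (z : XH n) (ρ : ℕ → Houghton n)
    (hcomm : ∀ s t, s ≠ t → Commute (ρ s) (ρ t))
    (hfin : ∀ t, {x | ((φ (ρ t) : Houghton n) : Equiv.Perm (XH n)) x ≠ x}.Finite)
    (hinj : Function.Injective fun t : ℕ => ((φ (ρ t) : Houghton n) : Equiv.Perm (XH n)) z) :
    False := by
  classical
  set C : ℕ → Equiv.Perm (XH n) := fun t => ((φ (ρ t) : Houghton n) : Equiv.Perm (XH n)) with hC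
  have hex : ∃ t0, C t0 z ≠ z := by
    by_contra hc
    push_neg at hc
    have h01 : C 0 z = C 1 z := by rw [hc 0, hc 1]
    exact absurd (hinj h01) (by omega)
  obtain ⟨t0, ht0⟩ := hex
  have hmove : ∀ t, t ≠ t0 → C t0 (C t z) ≠ C t z := by
    intro t ht hc
    have hcm : Commute (φ (ρ t)) (φ (ρ t0)) := Commute.map (hcomm t t0 ht) φ
    have hcm2 : C t0 * C t = C t * C t0 := by
      have := congrArg Subtype.val hcm.symm
      exact this
    have h1 : (C t0 * C t) z = C t z := by rw [Equiv.Perm.mul_apply]; exact hc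
    rw [hcm2, Equiv.Perm.mul_apply] at h1
    exact ht0 ((C t).injective h1)
  set g : ℕ → ℕ := fun t => if t < t0 then t else t + 1 with hg
  have hginj : Function.Injective g := by
    intro a b hab
    simp only [hg] at hab
    split_ifs at hab <;> omega
  have hgne : ∀ t, g t ≠ t0 := by
    intro t
    simp only [hg]
    split_ifs <;> omega
  have hsub : ∀ t : ℕ, (fun t => C (g t) z) t ∈ {x | C t0 x ≠ x} :=
    fun t => hmove (g t) (hgne t)
  have hinf : {x | C t0 x ≠ x}.Infinite :=
    Set.infinite_of_injective_forall_mem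
      (f := fun t : ℕ => C (g t) z)
      (fun a b hab => hginj (hinj hab)) hsub
  exact hinf (hfin t0)

lemma permOrbit_inv {α : Type*} (f : Equiv.Perm α) (x : α) :
    permOrbit f⁻¹ x = permOrbit f x := by
  unfold permOrbit
  ext w
  constructor
  · rintro ⟨k, rfl⟩
    exact ⟨-k, by show (f ^ (-k)) x = (f⁻¹ ^ k) x; rw [zpow_neg, ← inv_zpow]⟩
  · rintro ⟨k, rfl⟩
    exact ⟨-k, by show (f⁻¹ ^ (-k)) x = (f ^ k) x; rw [zpow_neg, inv_zpow, inv_inv]⟩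

lemma march_pos (f : Equiv.Perm (XH n)) (mv : Fin n → ℤ) (K : Finset (XH n))
    (hK : ∀ x : XH n, x ∉ K → (f x).1 = x.1 ∧ ((f x).2 : ℤ) = (x.2 : ℤ) + mv x.1)
    (r : Fin n) (hpos : 0 < mv r) {p : ℕ} (hbig : K.sup (fun w => w.2) < p) :
    InfiniteOrbit f (r, p) := by
  have hstep : ∀ m : ℕ, (f ^ m) (r, p) = (r, p + m * (mv r).toNat) := by
    intro m
    induction m with
    | zero => simp
    | succ m ih =>
      rw [pow_succ', Equiv.Perm.mul_apply, ih]
      have hnot : ((r, p + m * (mv r).toNat) : XH n) ∉ K := by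
        intro hc
        have := Finset.le_sup (f := fun w : XH n => w.2) hc
        simp only at this
        omega
      obtain ⟨h1, h2⟩ := hK _ hnot
      have h2' : ((f ((r, p + m * (mv r).toNat) : XH n)).2 : ℤ)
          = ((p + m * (mv r).toNat : ℕ) : ℤ) + mv r := h2
      have h1' : (f ((r, p + m * (mv r).toNat) : XH n)).1 = r := h1
      rw [Prod.ext_iff]
      refine ⟨h1', ?_⟩
      clear h1 h2 hnot
      rw [Nat.succ_mul]
      omega
  apply Set.infinite_of_injective_forall_mem
    (f := fun m : ℕ => ((r, p + m * (mv r).toNat) : XH n))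
  · intro a b hab
    rw [Prod.ext_iff] at hab
    have := hab.2
    simp only at this
    have hc : 0 < (mv r).toNat := by omega
    exact Nat.eq_of_mul_eq_mul_right hc (by omega)
  · intro m
    exact ⟨(m : ℤ), by show (f ^ (m : ℤ)) (r, p) = _; rw [zpow_natCast, hstep]⟩

lemma far_essential (h : Houghton n) (r : Fin n) (hr : vec h r ≠ 0) :
    ∃ B : ℕ, ∀ p : ℕ, B ≤ p → InfiniteOrbit (h : Equiv.Perm (XH n)) (r, p) := by
  obtain ⟨K, hK⟩ := vec_spec h
  obtain ⟨K', hK'⟩ := vec_spec h⁻¹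
  refine ⟨K.sup (fun w => w.2) + K'.sup (fun w => w.2) + 1, fun p hp => ?_⟩
  rcases lt_or_gt_of_ne hr with hneg | hpos
  · have hv : 0 < vec h⁻¹ r := by
      rw [vec_inv]
      simp only [Pi.neg_apply]
      omega
    have hres := march_pos ((h⁻¹ : Houghton n) : Equiv.Perm (XH n)) (vec h⁻¹) K' hK' r hv
      (p := p) (by omega)
    unfold InfiniteOrbit at hres ⊢
    rw [show ((h⁻¹ : Houghton n) : Equiv.Perm (XH n)) = ((h : Houghton n) : Equiv.Perm (XH n))⁻¹
      from rfl, permOrbit_inv] at hres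
    exact hres
  · exact march_pos _ (vec h) K hK r hpos (by omega)

end Engine
section UPLsec

variable {n : ℕ}

lemma swap_isFin (P Q : XH n) : {x | (Equiv.swap P Q) x ≠ x}.Finite := by
  apply Set.Finite.subset ((Set.finite_singleton Q).insert P)
  intro x hx
  by_contra hc
  simp only [Set.mem_insert_iff, Set.mem_singleton_iff, not_or] at hc
  exact hx (Equiv.swap_apply_of_ne_of_ne hc.1 hc.2)

lemma pow_fix_of_dvd {α : Type*} {f : Equiv.Perm α} {z : α} {d a : ℕ}
    (h : (f ^ d) z = z) (hdvd : d ∣ a) : (f ^ a) z = z := by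
  have := fixpt_zpow_dvd (he := h) (k := (a : ℤ)) (Int.natCast_dvd_natCast.mpr hdvd)
  simpa [zpow_natCast] using this

lemma inv_fix {α : Type*} {f : Equiv.Perm α} {z : α} (h : f z = z) : f⁻¹ z = z := by
  conv_lhs => rw [← h]
  exact f.symm_apply_apply z

lemma hough_coe_pow (h : Houghton n) (b : ℕ) :
    ((h ^ b : Houghton n) : Equiv.Perm (XH n)) = (h : Equiv.Perm (XH n)) ^ b := by
  induction b with
  | zero => simp
  | succ b ih => rw [pow_succ, pow_succ, Subgroup.coe_mul, ih]

lemma hough_coe_inv (h : Houghton n) :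
    ((h⁻¹ : Houghton n) : Equiv.Perm (XH n)) = (h : Equiv.Perm (XH n))⁻¹ := rfl

lemma UPL (h0 : 0 < n) (φ : Houghton n →* Houghton n)
    (j : Fin n) (hj : j ≠ ray0 n h0) (i : Fin n) (hi : i ≠ ray0 n h0)
    (z : XH n) (mP mQ : ℤ) (hPQ : mP ≠ mQ)
    (d : ℕ)
    (hzi : (((φ (hGen n h0 i hi) : Houghton n) : Equiv.Perm (XH n)) ^ d) z = z)
    (hzj : (((φ (hGen n h0 j hj) : Houghton n) : Equiv.Perm (XH n)) ^ d) z = z)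
    (a b : ℕ → ℕ)
    (had : ∀ t, d ∣ a t) (hbd : ∀ t, d ∣ b t)
    (haij : i = j → ∀ t, a t = 0)
    (hbP : ∀ t, 0 ≤ mP + b t) (hbQ : ∀ t, 0 ≤ mQ + b t)
    (hspace : ∀ s t, s ≠ t →
      (mP + b s ≠ mP + b t) ∧ (mP + b s ≠ mQ + b t) ∧ (mQ + b s ≠ mQ + b t))
    (hinj : Function.Injective fun t : ℕ =>
      (((φ (hGen n h0 i hi) : Houghton n) : Equiv.Perm (XH n)) ^ (a t))
      ((((φ (hGen n h0 j hj) : Houghton n) : Equiv.Perm (XH n)) ^ (b t))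
        (((φ (hSwap (lpt h0 j mP) (lpt h0 j mQ)) : Houghton n) : Equiv.Perm (XH n)) z))) :
    False := by
  classical
  set Gi : Houghton n := hGen n h0 i hi with hGi
  set Gj : Houghton n := hGen n h0 j hj with hGj
  set τ : Houghton n := hSwap (lpt h0 j mP) (lpt h0 j mQ) with hτ
  set w : ℕ → Houghton n := fun t => Gi ^ (a t) * Gj ^ (b t) with hw
  set ρ : ℕ → Houghton n := fun t => hSwap (lpt h0 j (mP + b t)) (lpt h0 j (mQ + b t)) with hρ
  have hwP : ∀ (t : ℕ) (m : ℤ), 0 ≤ m + b t →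
      ((w t : Houghton n) : Equiv.Perm (XH n)) (lpt h0 j m) = lpt h0 j (m + b t) := by
    intro t m hm
    show ((Gi ^ (a t) * Gj ^ (b t) : Houghton n) : Equiv.Perm (XH n)) (lpt h0 j m) = _
    rw [Subgroup.coe_mul, Equiv.Perm.mul_apply]
    have h1 : ((Gj ^ (b t) : Houghton n) : Equiv.Perm (XH n)) (lpt h0 j m)
        = lpt h0 j (m + b t) := by
      rw [hGj, hGen_coe_pow, lpt_pow]
    rw [h1]
    by_cases hij : i = j
    · rw [haij hij t, pow_zero]
      simp
    · rw [hGi, hGen_coe_pow]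
      apply gGen_pow_fix
      · rw [lpt_fst_of_nonneg h0 j hm]
        exact hj
      · rw [lpt_fst_of_nonneg h0 j hm]
        exact fun hc => hij hc.symm
  have key1 : ∀ t, ρ t = w t * τ * (w t)⁻¹ := by
    intro t
    rw [hτ, hSwap_conj, hρ]
    simp only
    rw [hwP t mP (hbP t), hwP t mQ (hbQ t)]
  have hcomm : ∀ s t, s ≠ t → Commute (ρ s) (ρ t) := by
    intro s t hst
    apply hough_commute
    show Commute (Equiv.swap _ _) (Equiv.swap _ _)
    obtain ⟨e1, e2, e3⟩ := hspace s t hst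
    obtain ⟨f1, f2, f3⟩ := hspace t s (Ne.symm hst)
    exact swap_commute_of_ne
      (fun h => e1 (lpt_inj h0 j hj h))
      (fun h => e2 (lpt_inj h0 j hj h))
      (fun h => f2 (lpt_inj h0 j hj h).symm)
      (fun h => e3 (lpt_inj h0 j hj h))
  have hfin : ∀ t, {x | ((φ (ρ t) : Houghton n) : Equiv.Perm (XH n)) x ≠ x}.Finite := by
    intro t
    apply isFin_phi_fin
    exact swap_isFin _ _
  have hfixw : ∀ t, ((φ (w t) : Houghton n) : Equiv.Perm (XH n)) z = z := by
    intro t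
    show ((φ (Gi ^ (a t) * Gj ^ (b t)) : Houghton n) : Equiv.Perm (XH n)) z = z
    rw [map_mul, map_pow, map_pow, Subgroup.coe_mul, Equiv.Perm.mul_apply,
      hough_coe_pow, hough_coe_pow]
    rw [pow_fix_of_dvd hzj (hbd t), pow_fix_of_dvd hzi (had t)]
  have hval : ∀ t, ((φ (ρ t) : Houghton n) : Equiv.Perm (XH n)) z =
      (((φ Gi : Houghton n) : Equiv.Perm (XH n)) ^ (a t))
        ((((φ Gj : Houghton n) : Equiv.Perm (XH n)) ^ (b t))
          (((φ τ : Houghton n) : Equiv.Perm (XH n)) z)) := by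
    intro t
    rw [key1 t, map_mul, map_mul, map_inv, Subgroup.coe_mul, Subgroup.coe_mul,
      Equiv.Perm.mul_apply, Equiv.Perm.mul_apply, hough_coe_inv, inv_fix (hfixw t)]
    show ((φ (Gi ^ (a t) * Gj ^ (b t)) : Houghton n) : Equiv.Perm (XH n)) _ = _
    rw [map_mul, map_pow, map_pow, Subgroup.coe_mul, Equiv.Perm.mul_apply,
      hough_coe_pow, hough_coe_pow]
  apply GPL φ z ρ hcomm hfin
  have heq : (fun t : ℕ => ((φ (ρ t) : Houghton n) : Equiv.Perm (XH n)) z)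
      = fun t : ℕ => (((φ Gi : Houghton n) : Equiv.Perm (XH n)) ^ (a t))
        ((((φ Gj : Houghton n) : Equiv.Perm (XH n)) ^ (b t))
          (((φ τ : Houghton n) : Equiv.Perm (XH n)) z)) := funext hval
  rw [heq]
  exact hinj

end UPLsec
section Nsec

variable {n : ℕ}

def NN (h0 : 0 < n) (φ : Houghton n →* Houghton n) (z : XH n) : Prop :=
  ∀ (i : Fin n) (hi : i ≠ ray0 n h0),
    ¬ InfiniteOrbit ((φ (hGen n h0 i hi) : Houghton n) : Equiv.Perm (XH n)) z

lemma spread_helper (C : ℕ) (hC : 0 < C) (off : ℕ) {s t : ℕ} (hst : s ≠ t) :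
    (C:ℤ) ≤ ((C*(s+1+off) : ℕ) : ℤ) - ((C*(t+1+off) : ℕ) : ℤ) ∨
    (C:ℤ) ≤ ((C*(t+1+off) : ℕ) : ℤ) - ((C*(s+1+off) : ℕ) : ℤ) := by
  push_cast
  rcases lt_or_gt_of_ne hst with h | h
  · right
    have h1 : (1:ℤ) ≤ (t:ℤ) - s := by omega
    have h2 := mul_le_mul_of_nonneg_left h1 (show (0:ℤ) ≤ C by positivity)
    nlinarith
  · left
    have h1 : (1:ℤ) ≤ (s:ℤ) - t := by omega
    have h2 := mul_le_mul_of_nonneg_left h1 (show (0:ℤ) ≤ C by positivity)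
    nlinarith

lemma T1gen (h0 : 0 < n) (φ : Houghton n →* Houghton n) (j : Fin n) (hj : j ≠ ray0 n h0)
    (mP mQ : ℤ) (hPQ : mP ≠ mQ) (z : XH n) (d : ℕ) (hd : 0 < d)
    (hzj : (((φ (hGen n h0 j hj) : Houghton n) : Equiv.Perm (XH n)) ^ d) z = z) :
    ¬ InfiniteOrbit ((φ (hGen n h0 j hj) : Houghton n) : Equiv.Perm (XH n))
      (((φ (hSwap (lpt h0 j mP) (lpt h0 j mQ)) : Houghton n) : Equiv.Perm (XH n)) z) := by
  intro hInf
  set S : ℕ := (mP - mQ).natAbs + mP.natAbs + mQ.natAbs + 1 with hS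
  set C : ℕ := d * S with hC
  have hCpos : 0 < C := by positivity
  have hSC : S ≤ C := Nat.le_mul_of_pos_left S hd
  set b : ℕ → ℕ := fun t => C * (t + 1 + 0) with hb
  apply UPL h0 φ j hj j hj z mP mQ hPQ d hzj hzj (fun _ => 0) b
  · intro t; exact dvd_zero d
  · intro t; exact ⟨S * (t + 1 + 0), by rw [hb]; simp only [hC]; ring⟩
  · intro _ t; rfl
  · intro t
    have h1 : C * 1 ≤ C * (t+1+0) := Nat.mul_le_mul_left C (by omega)
    simp only [hb]
    omega
  · intro t
    have h1 : C * 1 ≤ C * (t+1+0) := Nat.mul_le_mul_left C (by omega)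
    simp only [hb]
    omega
  · intro s t hst
    have key := spread_helper C hCpos 0 hst
    simp only [hb]
    omega
  · intro s t hst
    simp only [pow_zero, Equiv.Perm.one_apply] at hst
    have h2 : b s = b t := infOrbit_natpow_inj hInf hst
    have h3 := Nat.eq_of_mul_eq_mul_left hCpos h2
    omega

lemma hSwap_inv (P Q : XH n) : (hSwap P Q)⁻¹ = hSwap P Q :=
  inv_eq_of_mul_eq_one_right (hSwap_sq P Q)

lemma NN_self_eq (h0 : 0 < n) (φ : Houghton n →* Houghton n) (P : XH n) (z : XH n)
    (hz : NN h0 φ z) : NN h0 φ (((φ (hSwap P P) : Houghton n) : Equiv.Perm (XH n)) z) := by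
  have h1 : hSwap P P = 1 := by
    apply Subtype.ext
    show Equiv.swap P P = 1
    simp [Equiv.swap_self]
    rfl
  rw [h1, map_one]
  simpa using hz

lemma SL_line (h0 : 0 < n) (φ : Houghton n →* Houghton n) (j : Fin n) (hj : j ≠ ray0 n h0)
    (mP mQ : ℤ) (hPQ : mP ≠ mQ) (z : XH n) (hz : NN h0 φ z) :
    NN h0 φ (((φ (hSwap (lpt h0 j mP) (lpt h0 j mQ)) : Houghton n) : Equiv.Perm (XH n)) z) := by
  intro i hi
  obtain ⟨ej, hej, hejz⟩ := period_of_finOrbit (hz j hj)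
  obtain ⟨ei, hei, heiz⟩ := period_of_finOrbit (hz i hi)
  set d : ℕ := ei * ej with hd
  have hdpos : 0 < d := by positivity
  have hdj : (((φ (hGen n h0 j hj) : Houghton n) : Equiv.Perm (XH n)) ^ d) z = z :=
    pow_fix_of_dvd hejz ⟨ei, by rw [hd]; ring⟩
  have hdi : (((φ (hGen n h0 i hi) : Houghton n) : Equiv.Perm (XH n)) ^ d) z = z :=
    pow_fix_of_dvd heiz ⟨ej, by rw [hd]⟩
  by_cases hij : i = j
  · subst hij
    exact T1gen h0 φ i hi mP mQ hPQ z d hdpos hdi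
  -- i ≠ j
  by_cases hneg : mP < 0 ∧ mQ < 0
  · -- both points on ray0; they also lie on line i
    have heq : ∀ m : ℤ, m < 0 → lpt h0 j m = lpt h0 i m := by
      intro m hm
      unfold lpt
      rw [if_pos hm, if_pos hm]
    rw [heq mP hneg.1, heq mQ hneg.2]
    exact T1gen h0 φ i hi mP mQ hPQ z d hdpos hdi
  · -- at least one of mP mQ is ≥ 0
    -- helper for the 'both nonneg' case
    have hbothcase : (0 ≤ mP ∧ 0 ≤ mQ) →
        ¬ InfiniteOrbit ((φ (hGen n h0 i hi) : Houghton n) : Equiv.Perm (XH n))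
          (((φ (hSwap (lpt h0 j mP) (lpt h0 j mQ)) : Houghton n) : Equiv.Perm (XH n)) z) := by
      rintro ⟨hP0, hQ0⟩
      -- periodicity: A_i^d fixes the value
      have hfixP : ((((hGen n h0 i hi) ^ d : Houghton n)) : Equiv.Perm (XH n)) (lpt h0 j mP)
          = lpt h0 j mP := by
        rw [hGen_coe_pow]
        apply gGen_pow_fix
        · rw [lpt_fst_of_nonneg h0 j hP0]; exact hj
        · rw [lpt_fst_of_nonneg h0 j hP0]; exact fun hc => hij hc.symm
      have hfixQ : ((((hGen n h0 i hi) ^ d : Houghton n)) : Equiv.Perm (XH n)) (lpt h0 j mQ)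
          = lpt h0 j mQ := by
        rw [hGen_coe_pow]
        apply gGen_pow_fix
        · rw [lpt_fst_of_nonneg h0 j hQ0]; exact hj
        · rw [lpt_fst_of_nonneg h0 j hQ0]; exact fun hc => hij hc.symm
      have hcom : (hGen n h0 i hi) ^ d * hSwap (lpt h0 j mP) (lpt h0 j mQ)
          = hSwap (lpt h0 j mP) (lpt h0 j mQ) * (hGen n h0 i hi) ^ d := by
        have h1 := hSwap_conj ((hGen n h0 i hi) ^ d) (lpt h0 j mP) (lpt h0 j mQ)
        rw [hfixP, hfixQ] at h1
        calc (hGen n h0 i hi) ^ d * hSwap (lpt h0 j mP) (lpt h0 j mQ)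
            = ((hGen n h0 i hi) ^ d * hSwap (lpt h0 j mP) (lpt h0 j mQ)
              * ((hGen n h0 i hi) ^ d)⁻¹) * (hGen n h0 i hi) ^ d := by group
          _ = hSwap (lpt h0 j mP) (lpt h0 j mQ) * (hGen n h0 i hi) ^ d := by rw [h1]
      apply finOrbit_of_period hdpos
      have hchain : (((φ (hGen n h0 i hi) : Houghton n) : Equiv.Perm (XH n)) ^ d)
          (((φ (hSwap (lpt h0 j mP) (lpt h0 j mQ)) : Houghton n) : Equiv.Perm (XH n)) z)
          = ((φ ((hGen n h0 i hi) ^ d * hSwap (lpt h0 j mP) (lpt h0 j mQ)) : Houghton n)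
              : Equiv.Perm (XH n)) z := by
        rw [map_mul, Subgroup.coe_mul, Equiv.Perm.mul_apply, map_pow, hough_coe_pow]
      rw [hchain, hcom, map_mul, Subgroup.coe_mul, Equiv.Perm.mul_apply, map_pow,
        hough_coe_pow, hdi]
    -- mixed case helper
    have hmixed : ∀ (mR mT : ℤ), mR < 0 → 0 ≤ mT → mR ≠ mT →
        ¬ InfiniteOrbit ((φ (hGen n h0 i hi) : Houghton n) : Equiv.Perm (XH n))
          (((φ (hSwap (lpt h0 j mR) (lpt h0 j mT)) : Houghton n) : Equiv.Perm (XH n)) z) := by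
      intro mR mT hR hT hRT
      intro hInf
      -- A_j-period of the value
      have hTj := T1gen h0 φ j hj mR mT hRT z d hdpos hdj
      obtain ⟨E, hEpos, hEval⟩ := period_of_finOrbit hTj
      set S : ℕ := (mR - mT).natAbs + mR.natAbs + mT.natAbs + 1 with hS
      set C : ℕ := d * E * S with hC
      have hCpos : 0 < C := by positivity
      have hSC : S ≤ C := Nat.le_mul_of_pos_left S (by positivity)
      set b : ℕ → ℕ := fun t => C * (t + 1 + mR.natAbs) with hb
      set a : ℕ → ℕ := fun t => d * (t + 1) with ha
      apply UPL h0 φ j hj i hi z mR mT hRT d hdi hdj a b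
      · intro t; exact ⟨t + 1, rfl⟩
      · intro t; exact ⟨E * S * (t + 1 + mR.natAbs), by rw [hb]; simp only [hC]; ring⟩
      · intro hc; exact absurd hc hij
      · intro t
        have h1 : C * (1 + mR.natAbs) ≤ C * (t+1+mR.natAbs) := Nat.mul_le_mul_left C (by omega)
        have h2 : C * (1 + mR.natAbs) = C + C * mR.natAbs := by ring
        have h3 : mR.natAbs ≤ C * mR.natAbs := Nat.le_mul_of_pos_left _ hCpos
        simp only [hb]
        omega
      · intro t
        have h1 : 0 ≤ mT := hT
        simp only [hb]
        omega
      · intro s t hst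
        have key := spread_helper C hCpos mR.natAbs hst
        simp only [hb]
        omega
      · -- injectivity of values
        intro s t hst
        have hbE : ∀ u, ((((φ (hGen n h0 j hj) : Houghton n) : Equiv.Perm (XH n))) ^ (b u))
            (((φ (hSwap (lpt h0 j mR) (lpt h0 j mT)) : Houghton n) : Equiv.Perm (XH n)) z)
            = (((φ (hSwap (lpt h0 j mR) (lpt h0 j mT)) : Houghton n) : Equiv.Perm (XH n)) z) := by
          intro u
          apply pow_fix_of_dvd hEval
          exact ⟨d * S * (u + 1 + mR.natAbs), by rw [hb]; simp only [hC]; ring⟩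
        dsimp only at hst
        rw [hbE s, hbE t] at hst
        have h2 : a s = a t := infOrbit_natpow_inj hInf hst
        have h3 := Nat.eq_of_mul_eq_mul_left hdpos h2
        omega
    -- combine
    push_neg at hneg
    by_cases hP : mP < 0
    · have hQ : 0 ≤ mQ := by
        by_contra hc
        push_neg at hc
        exact absurd (hneg hP) (by omega)
      exact hmixed mP mQ hP hQ hPQ
    · push_neg at hP
      by_cases hQ : mQ < 0
      · have hswap : hSwap (lpt h0 j mP) (lpt h0 j mQ) = hSwap (lpt h0 j mQ) (lpt h0 j mP) := by
          apply Subtype.ext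
          show Equiv.swap _ _ = Equiv.swap _ _
          exact Equiv.swap_comm _ _
        rw [hswap]
        exact hmixed mQ mP hQ hP (Ne.symm hPQ)
      · push_neg at hQ
        exact hbothcase ⟨hP, hQ⟩

end Nsec
section NswapSec

variable {n : ℕ}

lemma N_swap_line (h0 : 0 < n) (φ : Houghton n →* Houghton n) (j : Fin n)
    (hj : j ≠ ray0 n h0) (P Q : XH n) (hP : P.1 = ray0 n h0 ∨ P.1 = j)
    (hQ : Q.1 = ray0 n h0 ∨ Q.1 = j) (z : XH n) (hz : NN h0 φ z) :
    NN h0 φ (((φ (hSwap P Q) : Houghton n) : Equiv.Perm (XH n)) z) := by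
  by_cases hPQ : P = Q
  · subst hPQ
    exact NN_self_eq h0 φ P z hz
  obtain ⟨mP, hmP⟩ := lpt_of_line h0 j P hP
  obtain ⟨mQ, hmQ⟩ := lpt_of_line h0 j Q hQ
  have hne : mP ≠ mQ := by
    intro hc
    exact hPQ (by rw [← hmP, ← hmQ, hc])
  rw [← hmP, ← hmQ]
  exact SL_line h0 φ j hj mP mQ hne z hz

lemma N_swap (hn : 2 ≤ n) (h0 : 0 < n) (φ : Houghton n →* Houghton n) (P Q : XH n)
    (z : XH n) (hz : NN h0 φ z) :
    NN h0 φ (((φ (hSwap P Q) : Houghton n) : Equiv.Perm (XH n)) z) := by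
  by_cases hP0 : P.1 = ray0 n h0
  · by_cases hQ0 : Q.1 = ray0 n h0
    · have h1n : (1 : ℕ) < n := hn
      refine N_swap_line h0 φ ⟨1, h1n⟩ ?_ P Q (Or.inl hP0) (Or.inl hQ0) z hz
      intro hc
      rw [Fin.ext_iff] at hc
      simp only [ray0] at hc
      omega
    · exact N_swap_line h0 φ Q.1 hQ0 P Q (Or.inl hP0) (Or.inr rfl) z hz
  · by_cases hQ0 : Q.1 = ray0 n h0
    · exact N_swap_line h0 φ P.1 hP0 P Q (Or.inr rfl) (Or.inl hQ0) z hz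
    · by_cases hPQ1 : P.1 = Q.1
      · exact N_swap_line h0 φ Q.1 hQ0 P Q (Or.inr hPQ1) (Or.inr rfl) z hz
      · set R : XH n := (ray0 n h0, 0) with hR
        have hPR : P ≠ R := fun hc => hP0 (by rw [hc])
        have hQR : Q ≠ R := fun hc => hQ0 (by rw [hc])
        have hQP : Q ≠ P := fun hc => hPQ1 (by rw [hc])
        have hkey := hSwap_conj (hSwap P R) R Q
        rw [show ((hSwap P R : Houghton n) : Equiv.Perm (XH n)) R = P from
          Equiv.swap_apply_right P R,
          show ((hSwap P R : Houghton n) : Equiv.Perm (XH n)) Q = Q from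
          Equiv.swap_apply_of_ne_of_ne hQP hQR] at hkey
        rw [← hkey, hSwap_inv, map_mul, map_mul, Subgroup.coe_mul, Subgroup.coe_mul,
          Equiv.Perm.mul_apply, Equiv.Perm.mul_apply]
        have hz1 := N_swap_line h0 φ P.1 hP0 P R (Or.inr rfl) (Or.inl rfl) z hz
        have hz2 := N_swap_line h0 φ Q.1 hQ0 R Q (Or.inl rfl) (Or.inr rfl) _ hz1
        exact N_swap_line h0 φ P.1 hP0 P R (Or.inr rfl) (Or.inl rfl) _ hz2

lemma N_prod (hn : 2 ≤ n) (h0 : 0 < n) (φ : Houghton n →* Houghton n)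
    (L : List (XH n × XH n)) :
    ∀ z : XH n, NN h0 φ z →
      NN h0 φ (((φ ((L.map fun pq => hSwap pq.1 pq.2).prod) : Houghton n)
        : Equiv.Perm (XH n)) z) := by
  induction L with
  | nil =>
    intro z hz
    simp only [List.map_nil, List.prod_nil, map_one, OneMemClass.coe_one,
      Equiv.Perm.coe_one, id_eq]
    exact hz
  | cons pq L ih =>
    intro z hz
    rw [List.map_cons, List.prod_cons, map_mul, Subgroup.coe_mul, Equiv.Perm.mul_apply]
    exact N_swap hn h0 φ pq.1 pq.2 _ (ih z hz)

lemma N_fin (hn : 2 ≤ n) (h0 : 0 < n) (φ : Houghton n →* Houghton n) (σ : Houghton n)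
    (hσ : {x | (σ : Equiv.Perm (XH n)) x ≠ x}.Finite) (z : XH n) (hz : NN h0 φ z) :
    NN h0 φ (((φ σ : Houghton n) : Equiv.Perm (XH n)) z) := by
  obtain ⟨L, hL⟩ := hough_fin_decomp σ hσ
  rw [hL]
  exact N_prod hn h0 φ L z hz

end NswapSec
section MainSec

variable {n : ℕ}

lemma hough_coe_zpow (h : Houghton n) (c : ℤ) :
    ((h ^ c : Houghton n) : Equiv.Perm (XH n)) = (h : Equiv.Perm (XH n)) ^ c := by
  cases c with
  | ofNat m =>
    show ((h ^ ((m : ℕ) : ℤ) : Houghton n) : Equiv.Perm (XH n)) = _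
    rw [zpow_natCast, hough_coe_pow]
    rw [show (Int.ofNat m) = ((m : ℕ) : ℤ) from rfl, zpow_natCast]
  | negSucc m =>
    rw [zpow_negSucc, zpow_negSucc, ← hough_coe_pow]
    rfl

lemma fix_list_prod (x : XH n) :
    ∀ l : List (Houghton n), (∀ h ∈ l, (h : Equiv.Perm (XH n)) x = x) →
      ((l.prod : Houghton n) : Equiv.Perm (XH n)) x = x := by
  intro l
  induction l with
  | nil => intro _; simp
  | cons a l ih =>
    intro hmem
    rw [List.prod_cons, Subgroup.coe_mul, Equiv.Perm.mul_apply,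
      ih (fun h hh => hmem h (List.mem_cons_of_mem a hh)), hmem a List.mem_cons_self]

lemma list_sum_apply (r : Fin n) :
    ∀ l : List (Fin n → ℤ), l.sum r = (l.map (fun v => v r)).sum := by
  intro l
  induction l with
  | nil => simp
  | cons a l ih => simp [ih]

lemma list_sum_ne_zero {l : List ℤ} (h : l.sum ≠ 0) : ∃ a ∈ l, a ≠ 0 := by
  by_contra hc
  push_neg at hc
  exact h (List.sum_eq_zero hc)

lemma vec_wfun (h0 : 0 < n) (k : Fin n → ℤ) (hk : ∑ i, k i = 0) (c : ℤ) :
    vec (((List.finRange n).map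
        (fun i => (if h : i ≠ ray0 n h0 then hGen n h0 i h else 1) ^ (c * k i))).prod)
      = fun r => c * k r := by
  classical
  rw [vec_list_prod, List.map_map]
  funext r
  rw [list_sum_apply, List.map_map]
  rw [← Fin.sum_univ_def]
  have hF : ∀ i : Fin n,
      ((fun v => v r) ∘ vec ∘ fun i =>
        (if h : i ≠ ray0 n h0 then hGen n h0 i h else 1) ^ (c * k i)) i
      = (if i = ray0 n h0 then 0 else (c * k i) * (gVec n h0 i r)) := by
    intro i
    simp only [Function.comp]
    by_cases hi : i ≠ ray0 n h0
    · rw [dif_pos hi, vec_zpow, vec_hGen, if_neg (fun hc => hi hc)]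
      simp [smul_eq_mul]
    · push_neg at hi
      rw [dif_neg (by simp [hi]), one_zpow, vec_one, if_pos hi]
      simp
  rw [Finset.sum_congr rfl (fun i _ => hF i)]
  by_cases hr : r = ray0 n h0
  · have hterm : ∀ i : Fin n, (if i = ray0 n h0 then 0 else (c * k i) * (gVec n h0 i r))
        = -(c * k i) + (if i = r then c * k i else 0) := by
      intro i
      by_cases hi : i = ray0 n h0
      · rw [if_pos hi, if_pos (by rw [hi, hr])]
        ring
      · rw [if_neg hi, if_neg (fun hc : i = r => hi (hc.trans hr))]
        show (c * k i) * (if r = ray0 n h0 then -1 else if r = i then 1 else 0) = _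
        rw [if_pos hr]
        ring
    rw [Finset.sum_congr rfl (fun i _ => hterm i), Finset.sum_add_distrib,
      Finset.sum_ite_eq' Finset.univ r (fun i => c * k i)]
    simp only [Finset.mem_univ, if_true]
    have h2 : ∑ i : Fin n, -(c * k i) = -(c * ∑ i, k i) := by
      rw [Finset.sum_neg_distrib, Finset.mul_sum]
    rw [h2, hk]
    ring
  · have hterm : ∀ i : Fin n, (if i = ray0 n h0 then 0 else (c * k i) * (gVec n h0 i r))
        = (if i = r then c * k r else 0) := by
      intro i
      by_cases hi : i = ray0 n h0
      · rw [if_pos hi, if_neg (fun hc : i = r => hr (by rw [← hc, hi]))]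
      · rw [if_neg hi]
        show (c * k i) * (if r = ray0 n h0 then -1 else if r = i then 1 else 0) = _
        rw [if_neg hr]
        by_cases hir : i = r
        · subst hir
          rw [if_pos rfl, if_pos rfl]
          ring
        · rw [if_neg (fun hc : r = i => hir hc.symm), if_neg hir]
          ring
    rw [Finset.sum_congr rfl (fun i _ => hterm i),
      Finset.sum_ite_eq' Finset.univ r (fun _ => c * k r)]
    simp

end MainSec
section FinalSec

variable {n : ℕ}

lemma main_forward (hn : 2 ≤ n) (h0 : 0 < n) (φ : Houghton n →* Houghton n)
    (x : XH n) (g : Houghton n)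
    (hg : InfiniteOrbit ((φ g : Houghton n) : Equiv.Perm (XH n)) x)
    (hNN : NN h0 φ x) : False := by
  classical
  have hper : ∀ i : Fin n, ∃ e : ℕ, 0 < e ∧ ∀ hi : i ≠ ray0 n h0,
      (((φ (hGen n h0 i hi) : Houghton n) : Equiv.Perm (XH n)) ^ e) x = x := by
    intro i
    by_cases hi : i ≠ ray0 n h0
    · obtain ⟨e, he, hex⟩ := period_of_finOrbit (hNN i hi)
      exact ⟨e, he, fun hi' => hex⟩
    · exact ⟨1, one_pos, fun hi' => absurd hi' hi⟩
  choose F hFpos hFfix using hper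
  set D : ℕ := ∏ i : Fin n, F i with hD
  have hDpos : 0 < D := Finset.prod_pos (fun i _ => hFpos i)
  have hDfix : ∀ (i : Fin n) (hi : i ≠ ray0 n h0),
      (((φ (hGen n h0 i hi) : Houghton n) : Equiv.Perm (XH n)) ^ D) x = x := fun i hi =>
    pow_fix_of_dvd (hFfix i hi) (Finset.dvd_prod_of_mem F (Finset.mem_univ i))
  set k : Fin n → ℤ := vec g with hk
  set wf : ℕ → Houghton n := fun t => ((List.finRange n).map
      (fun i => (if h : i ≠ ray0 n h0 then hGen n h0 i h else 1)
        ^ (((D * t : ℕ) : ℤ) * k i))).prod with hwf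
  have hvecw : ∀ t : ℕ, vec (wf t) = fun r => ((D * t : ℕ) : ℤ) * k r := fun t =>
    vec_wfun h0 k (vec_sum_zero g) _
  have hfixw : ∀ t : ℕ, ((φ (wf t) : Houghton n) : Equiv.Perm (XH n)) x = x := by
    intro t
    rw [hwf]
    simp only
    rw [map_list_prod, List.map_map]
    apply fix_list_prod
    intro h hh
    rw [List.mem_map] at hh
    obtain ⟨i, _, rfl⟩ := hh
    simp only [Function.comp]
    rw [map_zpow, hough_coe_zpow]
    by_cases hi : i ≠ ray0 n h0
    · rw [dif_pos hi]
      exact fixpt_zpow_dvd (hDfix i hi) ⟨(t : ℤ) * k i, by push_cast; ring⟩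
    · rw [dif_neg hi, map_one]
      simp
  set σf : ℕ → Houghton n := fun t => g ^ (D * t) * (wf t)⁻¹ with hσf
  have hdecomp : ∀ t, g ^ (D * t) = σf t * wf t := by
    intro t
    rw [hσf]
    simp only
    rw [inv_mul_cancel_right]
  have hvecσ : ∀ t, vec (σf t) = 0 := by
    intro t
    rw [hσf]
    simp only
    rw [vec_mul, vec_pow, vec_inv, hvecw]
    funext r
    simp only [Pi.add_apply, Pi.smul_apply, Pi.neg_apply, smul_eq_mul, Pi.zero_apply]
    push_cast
    ring
  set ξ : ℕ → XH n := fun t =>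
    (((φ g : Houghton n) : Equiv.Perm (XH n)) ^ (D * t)) x with hξ
  have hξinj : Function.Injective ξ := infOrbit_pow_inj hg hDpos
  have hξval : ∀ t, ξ t = ((φ (σf t) : Houghton n) : Equiv.Perm (XH n)) x := by
    intro t
    rw [hξ]
    simp only
    rw [← hough_coe_pow, ← map_pow, hdecomp t, map_mul, Subgroup.coe_mul,
      Equiv.Perm.mul_apply, hfixw t]
  have hξN : ∀ t, NN h0 φ (ξ t) := by
    intro t
    rw [hξval t]
    exact N_fin hn h0 φ (σf t) (isFin_of_vec_zero _ (hvecσ t)) x hNN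
  by_cases hm : vec (φ g) = 0
  · exact finOrbit_of_isFin (isFin_of_vec_zero _ hm) x hg
  have hrayB : ∀ r : Fin n, vec ((φ g) ^ D) r ≠ 0 →
      ∃ (i₀ : Fin n) (hi₀ : i₀ ≠ ray0 n h0) (B : ℕ), ∀ p : ℕ, B ≤ p →
        InfiniteOrbit ((φ (hGen n h0 i₀ hi₀) : Houghton n) : Equiv.Perm (XH n)) (r, p) := by
    intro r hr
    have hdecomp1 : g ^ D = σf 1 * wf 1 := by
      have h := hdecomp 1
      rwa [Nat.mul_one] at h
    have h1 : vec ((φ g) ^ D) = vec (φ (σf 1)) + vec (φ (wf 1)) := by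
      rw [← vec_mul, ← map_mul, ← map_pow, hdecomp1]
    have h2 : vec (φ (σf 1)) = 0 := vec_phi_fin_zero φ _ (isFin_of_vec_zero _ (hvecσ 1))
    have hwne : vec (φ (wf 1)) r ≠ 0 := by
      intro hc
      apply hr
      rw [h1, h2]
      simp only [Pi.add_apply, Pi.zero_apply, zero_add]
      exact hc
    have h3 : vec (φ (wf 1)) = ((List.finRange n).map
        (fun i => vec (φ ((if h : i ≠ ray0 n h0 then hGen n h0 i h else 1)
          ^ (((D * 1 : ℕ) : ℤ) * k i))))).sum := by
      rw [hwf]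
      simp only
      rw [map_list_prod, List.map_map, vec_list_prod, List.map_map]
      rfl
    have h4 : ∃ a ∈ ((List.finRange n).map
        (fun i => vec (φ ((if h : i ≠ ray0 n h0 then hGen n h0 i h else 1)
          ^ (((D * 1 : ℕ) : ℤ) * k i))) r)), a ≠ 0 := by
      apply list_sum_ne_zero
      have h5 := congrFun h3 r
      rw [list_sum_apply, List.map_map] at h5
      rw [show ((List.finRange n).map
        (fun i => vec (φ ((if h : i ≠ ray0 n h0 then hGen n h0 i h else 1)
          ^ (((D * 1 : ℕ) : ℤ) * k i))) r)) = ((List.finRange n).map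
        ((fun v => v r) ∘ fun i => vec (φ ((if h : i ≠ ray0 n h0 then hGen n h0 i h else 1)
          ^ (((D * 1 : ℕ) : ℤ) * k i))))) from rfl]
      rw [← h5]
      exact hwne
    obtain ⟨a, ha, hane⟩ := h4
    rw [List.mem_map] at ha
    obtain ⟨i, _, rfl⟩ := ha
    have h6 : vec (φ ((if h : i ≠ ray0 n h0 then hGen n h0 i h else 1)
        ^ (((D * 1 : ℕ) : ℤ) * k i))) r
        = (((D * 1 : ℕ) : ℤ) * k i) * vec (φ (if h : i ≠ ray0 n h0 then hGen n h0 i h else 1)) r := by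
      rw [map_zpow, vec_zpow]
      simp [smul_eq_mul]
    rw [h6] at hane
    have h7 : vec (φ (if h : i ≠ ray0 n h0 then hGen n h0 i h else 1)) r ≠ 0 := by
      intro hc
      rw [hc] at hane
      simp at hane
    by_cases hi : i ≠ ray0 n h0
    · rw [dif_pos hi] at h7
      obtain ⟨B, hB⟩ := far_essential (φ (hGen n h0 i hi)) r h7
      exact ⟨i, hi, B, hB⟩
    · rw [dif_neg hi, map_one, vec_one] at h7
      simp at h7
  have hch : ∀ r : Fin n, ∃ B : ℕ, vec ((φ g) ^ D) r ≠ 0 →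
      ∃ (i₀ : Fin n) (hi₀ : i₀ ≠ ray0 n h0), ∀ p : ℕ, B ≤ p →
        InfiniteOrbit ((φ (hGen n h0 i₀ hi₀) : Houghton n) : Equiv.Perm (XH n)) (r, p) := by
    intro r
    by_cases hr : vec ((φ g) ^ D) r ≠ 0
    · obtain ⟨i₀, hi₀, B, hB⟩ := hrayB r hr
      exact ⟨B, fun _ => ⟨i₀, hi₀, hB⟩⟩
    · exact ⟨0, fun hc => absurd hc hr⟩
  choose Bf hBf using hch
  set Bstar : ℕ := Finset.univ.sup Bf with hBstar
  obtain ⟨K2, hK2⟩ := vec_spec ((φ g) ^ D)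
  have hBadFin : ((K2 : Set (XH n)) ∪ {w : XH n | w.2 < Bstar}).Finite := by
    apply Set.Finite.union K2.finite_toSet
    apply Set.Finite.subset (Finset.univ ×ˢ Finset.range Bstar).finite_toSet
    intro w hw
    rw [Finset.mem_coe, Finset.mem_product]
    exact ⟨Finset.mem_univ _, Finset.mem_range.mpr hw⟩
  have hesc : ∃ t : ℕ, ξ t ∉ ((K2 : Set (XH n)) ∪ {w : XH n | w.2 < Bstar}) := by
    by_contra hc
    push_neg at hc
    exact (Set.infinite_of_injective_forall_mem hξinj hc) hBadFin
  obtain ⟨t, ht⟩ := hesc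
  simp only [Set.mem_union, Set.mem_setOf_eq, not_or, not_lt] at ht
  obtain ⟨htK, htB⟩ := ht
  have hstep : (((φ g) ^ D : Houghton n) : Equiv.Perm (XH n)) (ξ t) = ξ (t+1) := by
    rw [hξ]
    simp only
    rw [hough_coe_pow, ← Equiv.Perm.mul_apply, ← pow_add]
    rw [show D + D * t = D * (t+1) by ring]
  have hvr : vec ((φ g) ^ D) (ξ t).1 ≠ 0 := by
    intro hzero
    have hcoords := hK2 (ξ t) (by rwa [← Finset.mem_coe])
    have heq : (((φ g) ^ D : Houghton n) : Equiv.Perm (XH n)) (ξ t) = ξ t := by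
      apply Prod.ext hcoords.1
      have h8 := hcoords.2
      rw [hzero] at h8
      simpa using h8
    rw [hstep] at heq
    exact absurd (hξinj heq) (by omega)
  obtain ⟨i₀, hi₀, hB⟩ := hBf (ξ t).1 hvr
  apply hξN t i₀ hi₀
  have hBle : Bf (ξ t).1 ≤ Bstar := Finset.le_sup (Finset.mem_univ _)
  have hfin := hB (ξ t).2 (le_trans hBle htB)
  rwa [Prod.mk.eta] at hfin

end FinalSec
/-- For `n ≥ 2` and an injective endomorphism `φ` of `H_n`, a
point of `X_n` has infinite orbit under `φ(g)` for some `g ∈ H_n` if and only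
if it has infinite orbit under `φ(g_i)` for some generator `g_i`:
`⋃_{g ∈ H_n} Es(φ(g)) = ⋃_{i=2}^{n} Es(φ(g_i))`. -/
theorem monomorphism_essential_points_union
    (n : ℕ) (hn : 2 ≤ n) (h0 : 0 < n)
    (φ : Houghton n →* Houghton n) (hφ : Function.Injective φ)
    (x : XH n) :
    (∃ g : Houghton n, InfiniteOrbit ((φ g : Houghton n) : Equiv.Perm (XH n)) x) ↔
    (∃ (i : Fin n) (hi : i ≠ ray0 n h0), InfiniteOrbit (imageGen h0 φ i hi) x) := by
  constructor
  · rintro ⟨g, hg⟩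
    by_contra hnot
    push_neg at hnot
    exact main_forward hn h0 φ x g hg (fun i hi => hnot i hi)
  · rintro ⟨i, hi, h⟩
    exact ⟨hGen n h0 i hi, h⟩
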